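/- Boundedness of the IPA iterates (Lemma 2, one-step form). Let n, b ≥ 1 and γ > 0. Let g_1,…,g_b : ℝ^n → ℝ be convex and Lipschitz continuous with constants L_1,…,L_b; set L := max{L_1,…,L_b} and g := (1/b)·Σ_{i=1}^b g_i. Let D : ℝ^n → ℝ^n be any map and define S(v) := D(v) − prox_{γg}(2·D(v) − v). Let v* ∈ ℝ^n satisfy S(v*) = 0 and set x* := D(v*). Fix any i ∈ {1,…,b} and any v ∈ ℝ^n, let x := D(v), z := prox_{γ g_i}(2x − v), and v⁺ := v + z − x. If ‖x − x*‖ ≤ R for some R ≥ 0, then ‖v⁺ − v*‖ ≤ R + 2γL. -/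

import Mathlib

open scoped RealInnerProductSpace

/-- Euclidean space ℝ^n. -/
abbrev En (n : ℕ) := EuclideanSpace ℝ (Fin n)

/-- `G` is the proximal operator `prox_{γf}`: for every `z`, `G z` minimizes
`x ↦ (1/2)‖x − z‖² + γ f x` over `ℝ^n`. -/
def IsProx {n : ℕ} (γ : ℝ) (f : En n → ℝ) (G : En n → En n) : Prop :=
  ∀ z x : En n,
    (1 / 2 : ℝ) * ‖G z - z‖ ^ 2 + γ * f (G z) ≤ (1 / 2 : ℝ) * ‖x - z‖ ^ 2 + γ * f x

lemma prox_displacement {n : ℕ} (γ ℓ : ℝ) (hγ : 0 < γ) (hℓ : 0 ≤ ℓ)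
    (f : En n → ℝ) (hf : ∀ x y, |f x - f y| ≤ ℓ * ‖x - y‖)
    (G : En n → En n) (hG : IsProx γ f G) (w : En n) :
    ‖G w - w‖ ≤ γ * ℓ := by
  set d := ‖G w - w‖ with hd
  have hd0 : 0 ≤ d := norm_nonneg _
  have key : d ^ 2 ≤ γ * ℓ * d := by
    apply le_of_forall_pos_le_add
    intro ε hε
    set t : ℝ := min 1 (ε / (d ^ 2 + 1)) with ht
    have hden : (0:ℝ) < d ^ 2 + 1 := by positivity
    have ht0 : 0 < t := lt_min one_pos (div_pos hε hden)
    have ht1 : t ≤ 1 := min_le_left _ _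
    have ht2 : t * (d ^ 2 + 1) ≤ ε := by
      have := min_le_right 1 (ε / (d ^ 2 + 1))
      calc t * (d ^ 2 + 1) ≤ (ε / (d ^ 2 + 1)) * (d ^ 2 + 1) := by
            apply mul_le_mul_of_nonneg_right this (le_of_lt hden)
        _ = ε := by field_simp
    have hx := hG w (G w + t • (w - G w))
    have h1 : ‖G w + t • (w - G w) - w‖ = (1 - t) * d := by
      have he : G w + t • (w - G w) - w = (1 - t) • (G w - w) := by module
      rw [he, norm_smul, Real.norm_eq_abs, abs_of_nonneg (by linarith : (0:ℝ) ≤ 1 - t)]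
    have h2 : ‖G w + t • (w - G w) - G w‖ = t * d := by
      have he : G w + t • (w - G w) - G w = (-t) • (G w - w) := by module
      rw [he, norm_smul, Real.norm_eq_abs, abs_neg, abs_of_pos ht0]
    have hfle : f (G w + t • (w - G w)) ≤ f (G w) + ℓ * (t * d) := by
      have h3 := hf (G w + t • (w - G w)) (G w)
      rw [h2] at h3
      have := le_abs_self (f (G w + t • (w - G w)) - f (G w))
      nlinarith
    rw [h1] at hx
    have hmain : t * (1 - t / 2) * d ^ 2 ≤ γ * ℓ * (t * d) := by nlinarith
    have hdiv : (1 - t / 2) * d ^ 2 ≤ γ * ℓ * d := by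
      exact (mul_le_mul_iff_right₀ ht0).mp (by linarith [hmain] : t * ((1 - t/2) * d ^ 2) ≤ t * (γ * ℓ * d))
    nlinarith
  rcases eq_or_lt_of_le hd0 with h | h
  · rw [← h]; positivity
  · nlinarith


set_option maxHeartbeats 1000000

/-- Boundedness of the IPA iterates (Lemma 2, one-step form). -/
theorem ipa_one_step_bound {n b : ℕ} (hn : 1 ≤ n) (hb : 1 ≤ b)
    (γ : ℝ) (hγ : 0 < γ)
    (g : Fin b → En n → ℝ)
    (hconv : ∀ i, ConvexOn ℝ Set.univ (g i))
    (Lc : Fin b → ℝ)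
    (hlip : ∀ i, ∀ x y : En n, |g i x - g i y| ≤ Lc i * ‖x - y‖)
    (L : ℝ) (hL : L = ⨆ i, Lc i)
    (D : En n → En n)
    (G : En n → En n) (hG : IsProx γ (fun x => (1 / (b : ℝ)) * ∑ i, g i x) G)
    (Gi : Fin b → En n → En n) (hGi : ∀ i, IsProx γ (g i) (Gi i))
    (S : En n → En n) (hS : ∀ v : En n, S v = D v - G ((2 : ℝ) • D v - v))
    (vstar : En n) (hvstar : S vstar = 0)
    (xstar : En n) (hxstar : xstar = D vstar)
    (i : Fin b) (v : En n)
    (x z vplus : En n)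
    (hx : x = D v) (hz : z = Gi i ((2 : ℝ) • x - v)) (hvplus : vplus = v + z - x)
    (R : ℝ) (hR : ‖x - xstar‖ ≤ R) :
    ‖vplus - vstar‖ ≤ R + 2 * γ * L := by
  haveI : Nonempty (Fin b) := ⟨⟨0, hb⟩⟩
  -- each Lipschitz constant is nonnegative
  have hLc0 : ∀ j, 0 ≤ Lc j := by
    intro j
    have he : ‖(EuclideanSpace.single (⟨0, hn⟩ : Fin n) (1:ℝ)) - 0‖ = 1 := by
      simp [EuclideanSpace.norm_single]
    have := hlip j (EuclideanSpace.single (⟨0, hn⟩ : Fin n) (1:ℝ)) 0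
    rw [he, mul_one] at this
    exact le_trans (abs_nonneg _) this
  have hLcL : ∀ j, Lc j ≤ L := by
    intro j
    rw [hL]
    exact le_ciSup (Set.Finite.bddAbove (Set.finite_range Lc)) j
  have hL0 : 0 ≤ L := le_trans (hLc0 i) (hLcL i)
  -- the average is L-Lipschitz
  have havg : ∀ p q : En n,
      |(fun x => (1 / (b : ℝ)) * ∑ j, g j x) p - (fun x => (1 / (b : ℝ)) * ∑ j, g j x) q|
        ≤ L * ‖p - q‖ := by
    intro p q
    have hb0 : (0:ℝ) < (b:ℝ) := by exact_mod_cast hb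
    simp only
    rw [← mul_sub, ← Finset.sum_sub_distrib, abs_mul, abs_of_pos (by positivity : (0:ℝ) < 1 / b)]
    have hsum : |∑ j, (g j p - g j q)| ≤ ∑ j : Fin b, L * ‖p - q‖ := by
      refine le_trans (Finset.abs_sum_le_sum_abs _ _) ?_
      apply Finset.sum_le_sum
      intro j _
      exact le_trans (hlip j p q) (mul_le_mul_of_nonneg_right (hLcL j) (norm_nonneg _))
    rw [Finset.sum_const, Finset.card_univ, Fintype.card_fin, nsmul_eq_mul] at hsum
    calc 1 / (b:ℝ) * |∑ j, (g j p - g j q)| ≤ 1 / (b:ℝ) * ((b:ℝ) * (L * ‖p - q‖)) := by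
          apply mul_le_mul_of_nonneg_left hsum (by positivity)
      _ = L * ‖p - q‖ := by field_simp
  -- each g j is (L)-Lipschitz; prox displacements
  have hd1 : ‖z - ((2:ℝ) • x - v)‖ ≤ γ * L := by
    rw [hz]
    calc ‖Gi i ((2:ℝ) • x - v) - ((2:ℝ) • x - v)‖ ≤ γ * Lc i :=
          prox_displacement γ (Lc i) hγ (hLc0 i) (g i) (hlip i) (Gi i) (hGi i) _
      _ ≤ γ * L := mul_le_mul_of_nonneg_left (hLcL i) (le_of_lt hγ)
  have hfix : xstar = G ((2:ℝ) • xstar - vstar) := by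
    have h0 := hvstar
    rw [hS vstar, sub_eq_zero] at h0
    rw [hxstar]; exact h0
  have hd2 : ‖xstar - ((2:ℝ) • xstar - vstar)‖ ≤ γ * L := by
    have hd2' := prox_displacement γ L hγ hL0
      (fun x => (1 / (b : ℝ)) * ∑ j, g j x) havg G hG ((2:ℝ) • xstar - vstar)
    rw [← hfix] at hd2'
    exact hd2'
  -- decomposition
  have hdecomp : vplus - vstar =
      (x - xstar) + (z - ((2:ℝ) • x - v)) - (xstar - ((2:ℝ) • xstar - vstar)) := by
    rw [hvplus]; module
  calc ‖vplus - vstar‖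
      ≤ ‖x - xstar‖ + ‖z - ((2:ℝ) • x - v)‖ + ‖xstar - ((2:ℝ) • xstar - vstar)‖ := by
        rw [hdecomp]
        exact le_trans (norm_sub_le _ _) (by linarith [norm_add_le (x - xstar) (z - ((2:ℝ) • x - v))])
    _ ≤ R + γ * L + γ * L := by linarith
    _ = R + 2 * γ * L := by ring
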